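/- arXiv:2107.10586 — 2 statements merged into one kernel-verified Lean document; each statement's English description precedes it below -/
import Mathlib

section
/- For any z₀ in the upper half-plane, ∫₀^π Im(e^{t S}·z₀) dt = π, where e^{tS} = [[cos t, sin t],[−sin t, cos t]] acts by Möbius transformations. Consequently the phase factor j(e^{π Ŝ_B}, z) = exp(2iB∫₀^π Im(e^{tS}·z) dt) equals e^{2πiB}, independent of z. -/
open Complex Real

/-- The Möbius action of e^{tS} = [[cos t, sin t],[−sin t, cos t]]. -/
noncomputable def rotAct (t : ℝ) (z : ℂ) : ℂ :=
  ((Real.cos t : ℂ) * z + (Real.sin t : ℂ)) / (-(Real.sin t : ℂ) * z + (Real.cos t : ℂ))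

private lemma hasDerivAt_im' {f : ℝ → ℂ} {f' : ℂ} {x : ℝ} (hf : HasDerivAt f f' x) :
    HasDerivAt (fun t => (f t).im) f'.im x := by
  have := (Complex.imCLM.hasFDerivAt.comp x hf.hasFDerivAt).hasDerivAt
  convert this using 1
  · rfl
  · rfl
  · rfl
  · simp

/-- ∫₀^π Im(e^{tS}·z₀) dt = π for z₀ ∈ ℍ; hence the phase
exp(2iB ∫₀^π Im(e^{tS}·z) dt) = e^{2πiB}, independent of z. -/
theorem integral_im_rot_orbit (B : ℝ) (z₀ : ℂ) (hz₀ : 0 < z₀.im) :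
    (∫ t in (0:ℝ)..Real.pi, (rotAct t z₀).im) = Real.pi ∧
    Complex.exp (2 * Complex.I * (B : ℂ) *
        ((∫ t in (0:ℝ)..Real.pi, (rotAct t z₀).im : ℝ) : ℂ)) =
      Complex.exp (2 * Real.pi * Complex.I * (B : ℂ)) := by
  set D : ℝ → ℂ := fun t => -(Real.sin t : ℂ) * z₀ + (Real.cos t : ℂ) with hDdef
  have hD : ∀ t : ℝ, D t ≠ 0 := by
    intro t h
    by_cases hs : Real.sin t = 0
    · have : (D t).re = Real.cos t := by simp [hDdef, hs, -Complex.ofReal_sin, -Complex.ofReal_cos]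
      have hc : Real.cos t ≠ 0 := by
        have := Real.sin_sq_add_cos_sq t
        intro hc0; rw [hs, hc0] at this; norm_num at this
      rw [h] at this; simp at this; exact hc this.symm
    · have : (D t).im = -Real.sin t * z₀.im := by simp [hDdef, -Complex.ofReal_sin, -Complex.ofReal_cos]
      rw [h] at this
      simp at this
      rcases this with h1 | h2
      · exact hs h1
      · exact absurd h2 (ne_of_gt hz₀)
  -- slit plane membership of I * D t for t ∈ [0, π]
  have hslit : ∀ t ∈ Set.Icc (0:ℝ) Real.pi, I * D t ∈ Complex.slitPlane := by
    intro t ht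
    rcases lt_or_eq_of_le (Real.sin_nonneg_of_nonneg_of_le_pi ht.1 ht.2) with hs | hs
    · left
      have : (I * D t).re = Real.sin t * z₀.im := by simp [hDdef, -Complex.ofReal_sin, -Complex.ofReal_cos]
      rw [this]; positivity
    · right
      have hsz : Real.sin t = 0 := hs.symm
      have : (I * D t).im = Real.cos t := by simp [hDdef, hsz, -Complex.ofReal_sin, -Complex.ofReal_cos]
      rw [this]
      intro hc0
      have := Real.sin_sq_add_cos_sq t
      rw [hsz, hc0] at this; norm_num at this
  -- derivative of D
  have hDder : ∀ t : ℝ, HasDerivAt D (-((Real.cos t : ℂ) * z₀ + (Real.sin t : ℂ))) t := by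
    intro t
    have h1 : HasDerivAt (fun t : ℝ => ((Real.sin t : ℝ) : ℂ)) (Real.cos t) t :=
      (Real.hasDerivAt_sin t).ofReal_comp
    have h2 : HasDerivAt (fun t : ℝ => ((Real.cos t : ℝ) : ℂ)) (((-Real.sin t : ℝ)) : ℂ) t :=
      (Real.hasDerivAt_cos t).ofReal_comp
    have := ((h1.neg.mul_const z₀).add h2)
    convert this using 1
    · rfl
    · rfl
    push_cast; ring
  set F : ℝ → ℝ := fun t => -(Complex.log (I * D t)).im with hFdef
  have hF : ∀ t ∈ Set.Icc (0:ℝ) Real.pi, HasDerivAt F ((rotAct t z₀).im) t := by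
    intro t ht
    have hlog : HasDerivAt (fun t => Complex.log (I * D t))
        ((I * D t)⁻¹ * (I * -((Real.cos t : ℂ) * z₀ + (Real.sin t : ℂ)))) t := by
      exact (Complex.hasDerivAt_log (hslit t ht)).comp t ((hDder t).const_mul I)
    have him := (hasDerivAt_im' hlog).neg
    convert him using 1
    · rfl
    · rfl
    · rfl
    have hIne : (I : ℂ) ≠ 0 := Complex.I_ne_zero
    have key : (I * D t)⁻¹ * (I * -((Real.cos t : ℂ) * z₀ + (Real.sin t : ℂ)))
        = -(rotAct t z₀) := by
      rw [inv_mul_eq_div, mul_div_mul_left _ _ Complex.I_ne_zero, rotAct, neg_div, hDdef]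
    rw [key]; simp
  have hcont : ContinuousOn (fun t => (rotAct t z₀).im) (Set.Icc (0:ℝ) Real.pi) := by
    apply Continuous.continuousOn
    apply Complex.continuous_im.comp
    apply Continuous.div
    · continuity
    · continuity
    · exact fun t => hD t
  have hint : (∫ t in (0:ℝ)..Real.pi, (rotAct t z₀).im) = F Real.pi - F 0 := by
    apply intervalIntegral.integral_eq_sub_of_hasDerivAt
    · intro t ht
      rw [Set.uIcc_of_le Real.pi_pos.le] at ht
      exact hF t ht
    · exact hcont.intervalIntegrable_of_Icc Real.pi_pos.le
  have hF0 : F 0 = -(Real.pi / 2) := by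
    have : D 0 = 1 := by simp [hDdef]
    rw [hFdef]; simp only [this, mul_one]
    rw [Complex.log_im, Complex.arg_I]
  have hFpi : F Real.pi = Real.pi / 2 := by
    have : D Real.pi = -1 := by simp [hDdef]
    rw [hFdef]; simp only [this, mul_neg, mul_one]
    rw [Complex.log_im, Complex.arg_neg_I]
    ring
  have hval : (∫ t in (0:ℝ)..Real.pi, (rotAct t z₀).im) = Real.pi := by
    rw [hint, hF0, hFpi]; ring
  refine ⟨hval, ?_⟩
  rw [hval]
  ring_nf
end

section
/- Along the orbit z(t) = e^{tS}·z₀ in the upper half-plane, the integral ∫₀^θ Im(z(t)) dt equals −Im log(−sin θ · z₀ + cos θ) (for θ such that the path avoids branch issues), i.e. the antiderivative of y(t) = Im(e^{tS}z₀) is −arg(−sin t · z₀ + cos t). -/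
open Complex Real

/-- The denominator path t ↦ −sin t · z₀ + cos t. -/
noncomputable def denomPath (z₀ : ℂ) (t : ℝ) : ℂ :=
  -(Real.sin t : ℂ) * z₀ + (Real.cos t : ℂ)

lemma denomPath_ne_zero (z₀ : ℂ) (hz₀ : 0 < z₀.im) (t : ℝ) : denomPath z₀ t ≠ 0 := by
  intro h
  have him : -(Real.sin t) * z₀.im = 0 := by
    have := congrArg Complex.im h
    simpa [denomPath, Complex.sin_ofReal_re] using this
  have hs : Real.sin t = 0 := by
    rcases mul_eq_zero.1 him with h1 | h2
    · linarith [neg_eq_zero.1 h1]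
    · exact absurd h2 (ne_of_gt hz₀)
  have hre : -(Real.sin t) * z₀.re + Real.cos t = 0 := by
    have := congrArg Complex.re h
    simpa [denomPath, Complex.sin_ofReal_re, Complex.cos_ofReal_re] using this
  have hc : Real.cos t = 0 := by rw [hs] at hre; simpa using hre
  have := Real.sin_sq_add_cos_sq t
  rw [hs, hc] at this; norm_num at this

lemma denomPath_hasDerivAt (z₀ : ℂ) (t : ℝ) :
    HasDerivAt (denomPath z₀) (-(Real.cos t : ℂ) * z₀ + -(Real.sin t : ℂ)) t := by
  have h1 : HasDerivAt (fun s : ℝ => ((Real.sin s : ℂ))) (Real.cos t : ℂ) t :=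
    (Real.hasDerivAt_sin t).ofReal_comp
  have h2 : HasDerivAt (fun s : ℝ => ((Real.cos s : ℂ))) (-(Real.sin t) : ℝ) t := by
    simpa using (Real.hasDerivAt_cos t).ofReal_comp
  have := ((h1.neg.mul_const z₀).add h2)
  rw [Complex.ofReal_neg] at this; exact this

lemma hasDerivAt_neg_arg (z₀ : ℂ) (hz₀ : 0 < z₀.im) (t : ℝ)
    (h : denomPath z₀ t ∈ Complex.slitPlane) :
    HasDerivAt (fun s => -Complex.arg (denomPath z₀ s)) ((rotAct t z₀).im) t := by
  have hlog : HasDerivAt (fun s => Complex.log (denomPath z₀ s))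
      ((denomPath z₀ t)⁻¹ * (-(Real.cos t : ℂ) * z₀ + -(Real.sin t : ℂ))) t :=
    (Complex.hasDerivAt_log h).comp t (denomPath_hasDerivAt z₀ t)
  have him := (Complex.imCLM.hasFDerivAt.comp_hasDerivAt t hlog).neg
  have key : (rotAct t z₀) =
      -((denomPath z₀ t)⁻¹ * (-(Real.cos t : ℂ) * z₀ + -(Real.sin t : ℂ))) := by
    rw [rotAct, denomPath, div_eq_inv_mul]; ring
  have : (fun s => -Complex.arg (denomPath z₀ s)) =
      (fun s => -(Complex.imCLM (Complex.log (denomPath z₀ s)))) := by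
    funext s; simp [Complex.log_im]
  rw [this, key]
  exact him

/-- −arg(−sin t · z₀ + cos t) is an antiderivative of Im(e^{tS}·z₀) away from
the branch cut, and ∫₀^θ Im(e^{tS}·z₀) dt = −Im log(−sin θ · z₀ + cos θ) when the path stays
off the branch cut. -/
theorem integral_im_eq_neg_arg (z₀ : ℂ) (hz₀ : 0 < z₀.im) :
    (∀ t : ℝ, denomPath z₀ t ∈ Complex.slitPlane →
      HasDerivAt (fun s => -Complex.arg (denomPath z₀ s)) ((rotAct t z₀).im) t) ∧
    (∀ θ : ℝ, (∀ t ∈ Set.uIcc (0:ℝ) θ, denomPath z₀ t ∈ Complex.slitPlane) →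
      (∫ t in (0:ℝ)..θ, (rotAct t z₀).im) = -(Complex.log (denomPath z₀ θ)).im) := by
  refine ⟨hasDerivAt_neg_arg z₀ hz₀, fun θ hθ => ?_⟩
  have hcont : Continuous fun t => (rotAct t z₀).im := by
    apply Complex.continuous_im.comp
    apply Continuous.div
    · continuity
    · continuity
    · intro t; exact denomPath_ne_zero z₀ hz₀ t
  have := intervalIntegral.integral_eq_sub_of_hasDerivAt
    (f := fun s => -Complex.arg (denomPath z₀ s))
    (fun t ht => hasDerivAt_neg_arg z₀ hz₀ t (hθ t ht))
    (hcont.intervalIntegrable 0 θ)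
  rw [this]
  simp [denomPath, Complex.log_im]
end
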